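/- (Average-iterate Nash equilibrium for non-stationary two-player zero-sum matrix games, Appendix D.1.) Let A, B be positive integers, T a positive integer, R^1,…,R^T ∈ [0,1]^{A×B} payoff matrices, x^1,…,x^T probability vectors in Δ_A, y^1,…,y^T probability vectors in Δ_B, and ρ_x, ρ_y, Δ ≥ 0. Suppose (1/T)Σ_{t=1}^T (x^t)^⊤ R^t y^t − min_{y∈Δ_B} (1/T)Σ_{t=1}^T (x^t)^⊤ R^t y ≤ ρ_x, and max_{x∈Δ_A} (1/T)Σ_{t=1}^T x^⊤ R^t y^t − (1/T)Σ_{t=1}^T (x^t)^⊤ R^t y^t ≤ ρ_y, and Σ_{t=1}^{T−1} max_{a,b} |R^{t+1}_{ab} − R^t_{ab}| ≤ Δ. Then the averaged strategies x̄ = (1/T)Σ_t x^t, ȳ = (1/T)Σ_t y^t satisfy the duality-gap bound max_{x∈Δ_A} x^⊤ R^T ȳ − min_{y∈Δ_B} x̄^⊤ R^T y ≤ ρ_x + ρ_y + 2Δ. -/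
import Mathlib


open Finset

/-- Expected payoff to the max player in a two-player zero-sum matrix game with payoff
matrix `R`, when the max player plays the mixed strategy `x` and the min player plays `y`. -/
noncomputable def pay {A B : ℕ} (R : Fin A → Fin B → ℝ) (x : Fin A → ℝ) (y : Fin B → ℝ) : ℝ :=
  ∑ a, ∑ b, x a * R a b * y b

lemma pay_nonneg {A B : ℕ} {R : Fin A → Fin B → ℝ} {x : Fin A → ℝ} {y : Fin B → ℝ}
    (hR : ∀ a b, 0 ≤ R a b) (hx : ∀ a, 0 ≤ x a) (hy : ∀ b, 0 ≤ y b) :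
    0 ≤ pay R x y := by
  apply Finset.sum_nonneg; intro a _
  apply Finset.sum_nonneg; intro b _
  exact mul_nonneg (mul_nonneg (hx a) (hR a b)) (hy b)

lemma pay_le_one {A B : ℕ} {R : Fin A → Fin B → ℝ} {x : Fin A → ℝ} {y : Fin B → ℝ}
    (hR : ∀ a b, R a b ≤ 1) (hx : x ∈ stdSimplex ℝ (Fin A)) (hy : y ∈ stdSimplex ℝ (Fin B)) :
    pay R x y ≤ 1 := by
  have hle : pay R x y ≤ ∑ a, ∑ b, x a * 1 * y b := by
    apply Finset.sum_le_sum; intro a _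
    apply Finset.sum_le_sum; intro b _
    exact mul_le_mul_of_nonneg_right
      (mul_le_mul_of_nonneg_left (hR a b) (hx.1 a)) (hy.1 b)
  calc pay R x y ≤ ∑ a, ∑ b, x a * 1 * y b := hle
    _ = 1 := by
        have h1 : ∀ a : Fin A, ∑ b, x a * 1 * y b = x a := by
          intro a
          rw [← Finset.mul_sum, hy.2]
          ring
        simp only [h1, hx.2]

/-- Entrywise perturbation bound: if `R ≤ R' + d` entrywise then the payoffs differ by
at most `d`. -/
lemma pay_le_pay_add {A B : ℕ} {R R' : Fin A → Fin B → ℝ} {x : Fin A → ℝ} {y : Fin B → ℝ}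
    {d : ℝ} (h : ∀ a b, R a b ≤ R' a b + d)
    (hx : x ∈ stdSimplex ℝ (Fin A)) (hy : y ∈ stdSimplex ℝ (Fin B)) :
    pay R x y ≤ pay R' x y + d := by
  have h2 : ∑ a, ∑ b, x a * d * y b = d := by
    have h1 : ∀ a : Fin A, ∑ b, x a * d * y b = x a * d := by
      intro a; rw [← Finset.mul_sum, hy.2, mul_one]
    simp only [h1]
    rw [← Finset.sum_mul, hx.2, one_mul]
  calc pay R x y ≤ ∑ a, ∑ b, x a * (R' a b + d) * y b := by
        apply Finset.sum_le_sum; intro a _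
        apply Finset.sum_le_sum; intro b _
        exact mul_le_mul_of_nonneg_right
          (mul_le_mul_of_nonneg_left (h a b) (hx.1 a)) (hy.1 b)
    _ = pay R' x y + d := by
        have hterm : ∀ a : Fin A, ∀ b : Fin B,
            x a * (R' a b + d) * y b = x a * R' a b * y b + x a * d * y b := by
          intro a b; ring
        simp only [hterm, Finset.sum_add_distrib, pay, h2]

/-- `pay` is linear in the second strategy. -/
lemma pay_avg_right {A B : ℕ} (R : Fin A → Fin B → ℝ) (x : Fin A → ℝ)
    (c : ℝ) (S : Finset ℕ) (y : ℕ → Fin B → ℝ) :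
    pay R x (fun b => c * ∑ t ∈ S, y t b) = c * ∑ t ∈ S, pay R x (y t) := by
  have key : ∀ a : Fin A, ∀ b : Fin B,
      x a * R a b * (c * ∑ t ∈ S, y t b) = ∑ t ∈ S, c * (x a * R a b * y t b) := by
    intro a b
    rw [Finset.mul_sum, Finset.mul_sum]
    exact Finset.sum_congr rfl fun t _ => by ring
  calc pay R x (fun b => c * ∑ t ∈ S, y t b)
      = ∑ a, ∑ b, ∑ t ∈ S, c * (x a * R a b * y t b) := by
        simp only [pay, key]
    _ = ∑ a, ∑ t ∈ S, ∑ b, c * (x a * R a b * y t b) :=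
        Finset.sum_congr rfl fun a _ => Finset.sum_comm
    _ = ∑ t ∈ S, ∑ a, ∑ b, c * (x a * R a b * y t b) := Finset.sum_comm
    _ = c * ∑ t ∈ S, pay R x (y t) := by
        rw [Finset.mul_sum]
        refine Finset.sum_congr rfl fun t _ => ?_
        simp only [pay, Finset.mul_sum]

/-- `pay` is linear in the first strategy. -/
lemma pay_avg_left {A B : ℕ} (R : Fin A → Fin B → ℝ) (y : Fin B → ℝ)
    (c : ℝ) (S : Finset ℕ) (x : ℕ → Fin A → ℝ) :
    pay R (fun a => c * ∑ t ∈ S, x t a) y = c * ∑ t ∈ S, pay R (x t) y := by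
  have key : ∀ a : Fin A, ∀ b : Fin B,
      (c * ∑ t ∈ S, x t a) * R a b * y b = ∑ t ∈ S, c * (x t a * R a b * y b) := by
    intro a b
    rw [Finset.mul_sum, Finset.sum_mul, Finset.sum_mul]
    exact Finset.sum_congr rfl fun t _ => by ring
  calc pay R (fun a => c * ∑ t ∈ S, x t a) y
      = ∑ a, ∑ b, ∑ t ∈ S, c * (x t a * R a b * y b) := by
        simp only [pay, key]
    _ = ∑ a, ∑ t ∈ S, ∑ b, c * (x t a * R a b * y b) :=
        Finset.sum_congr rfl fun a _ => Finset.sum_comm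
    _ = ∑ t ∈ S, ∑ a, ∑ b, c * (x t a * R a b * y b) := Finset.sum_comm
    _ = c * ∑ t ∈ S, pay R (x t) y := by
        rw [Finset.mul_sum]
        refine Finset.sum_congr rfl fun t _ => ?_
        simp only [pay, Finset.mul_sum]

/-- (Average-iterate Nash equilibrium for non-stationary two-player zero-sum matrix games,
Appendix D.1.) Given external-regret guarantees ρ_x, ρ_y for the two players' strategy
sequences against the non-stationary payoff matrices R^1,…,R^T with total variation at most Δ,
the averaged strategies (x̄, ȳ) have duality gap at most ρ_x + ρ_y + 2Δ in the final game R^T. -/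
theorem stmt_5 (A B T : ℕ) (hA : 0 < A) (hB : 0 < B) (hT : 0 < T)
    (R : ℕ → Fin A → Fin B → ℝ)
    (hR : ∀ t ∈ Finset.Icc 1 T, ∀ a b, R t a b ∈ Set.Icc (0 : ℝ) 1)
    (x : ℕ → Fin A → ℝ) (hx : ∀ t ∈ Finset.Icc 1 T, x t ∈ stdSimplex ℝ (Fin A))
    (y : ℕ → Fin B → ℝ) (hy : ∀ t ∈ Finset.Icc 1 T, y t ∈ stdSimplex ℝ (Fin B))
    (ρx ρy Δ : ℝ) (hρx : 0 ≤ ρx) (hρy : 0 ≤ ρy) (hΔ : 0 ≤ Δ)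
    (hregx : (1 / (T : ℝ)) * ∑ t ∈ Finset.Icc 1 T, pay (R t) (x t) (y t)
        - (⨅ yy : stdSimplex ℝ (Fin B),
            (1 / (T : ℝ)) * ∑ t ∈ Finset.Icc 1 T, pay (R t) (x t) yy) ≤ ρx)
    (hregy : (⨆ xx : stdSimplex ℝ (Fin A),
          (1 / (T : ℝ)) * ∑ t ∈ Finset.Icc 1 T, pay (R t) xx (y t))
        - (1 / (T : ℝ)) * ∑ t ∈ Finset.Icc 1 T, pay (R t) (x t) (y t) ≤ ρy)
    (hvar : ∑ t ∈ Finset.Icc 1 (T - 1),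
        (Finset.univ : Finset (Fin A × Fin B)).sup'
          (by have : Nonempty (Fin A × Fin B) := ⟨(⟨0, hA⟩, ⟨0, hB⟩)⟩
              exact Finset.univ_nonempty)
          (fun p => |R (t + 1) p.1 p.2 - R t p.1 p.2|) ≤ Δ) :
    (⨆ xx : stdSimplex ℝ (Fin A),
        pay (R T) xx (fun b => (1 / (T : ℝ)) * ∑ t ∈ Finset.Icc 1 T, y t b))
      - (⨅ yy : stdSimplex ℝ (Fin B),
          pay (R T) (fun a => (1 / (T : ℝ)) * ∑ t ∈ Finset.Icc 1 T, x t a) yy)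
      ≤ ρx + ρy + 2 * Δ := by
  have hABne : Nonempty (Fin A × Fin B) := ⟨(⟨0, hA⟩, ⟨0, hB⟩)⟩
  have hTne : (T : ℝ) ≠ 0 := Nat.cast_ne_zero.mpr hT.ne'
  have hTinv : (0 : ℝ) ≤ 1 / (T : ℝ) := by positivity
  -- supremum of the variation terms is nonnegative
  set D : ℕ → ℝ := fun s =>
    (Finset.univ : Finset (Fin A × Fin B)).sup'
      (Finset.univ_nonempty) (fun p => |R (s + 1) p.1 p.2 - R s p.1 p.2|) with hD
  have hDnn : ∀ s, 0 ≤ D s := by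
    intro s
    have := Finset.le_sup' (fun p : Fin A × Fin B => |R (s + 1) p.1 p.2 - R s p.1 p.2|)
      (Finset.mem_univ ((⟨0, hA⟩, ⟨0, hB⟩) : Fin A × Fin B))
    exact le_trans (abs_nonneg _) this
  have hvar' : ∑ t ∈ Finset.Icc 1 (T - 1), D t ≤ Δ := hvar
  -- key: every matrix in the horizon is within Δ of R T, entrywise
  have hdiff : ∀ t ∈ Finset.Icc 1 T, ∀ a b, |R T a b - R t a b| ≤ Δ := by
    intro t ht a b
    obtain ⟨ht1, ht2⟩ := Finset.mem_Icc.mp ht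
    have tel : R T a b - R t a b = ∑ s ∈ Finset.Ico t T, (R (s + 1) a b - R s a b) := by
      rw [Finset.sum_Ico_eq_sub _ ht2, Finset.sum_range_sub (fun n => R n a b),
        Finset.sum_range_sub (fun n => R n a b)]
      ring
    calc |R T a b - R t a b| = |∑ s ∈ Finset.Ico t T, (R (s + 1) a b - R s a b)| := by
          rw [tel]
      _ ≤ ∑ s ∈ Finset.Ico t T, |R (s + 1) a b - R s a b| :=
          Finset.abs_sum_le_sum_abs _ _
      _ ≤ ∑ s ∈ Finset.Ico t T, D s := by
          apply Finset.sum_le_sum; intro s _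
          exact Finset.le_sup' (fun p : Fin A × Fin B => |R (s + 1) p.1 p.2 - R s p.1 p.2|)
            (Finset.mem_univ (a, b))
      _ ≤ ∑ s ∈ Finset.Icc 1 (T - 1), D s := by
          apply Finset.sum_le_sum_of_subset_of_nonneg
          · intro s hs
            obtain ⟨hs1, hs2⟩ := Finset.mem_Ico.mp hs
            exact Finset.mem_Icc.mpr ⟨le_trans ht1 hs1, Nat.le_sub_one_of_lt hs2⟩
          · intro s _ _; exact hDnn s
      _ ≤ Δ := hvar'
  have hup : ∀ t ∈ Finset.Icc 1 T, ∀ a b, R T a b ≤ R t a b + Δ := by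
    intro t ht a b
    have := hdiff t ht a b
    have h1 := abs_le.mp this
    linarith [h1.2]
  have hdown : ∀ t ∈ Finset.Icc 1 T, ∀ a b, R t a b ≤ R T a b + Δ := by
    intro t ht a b
    have := hdiff t ht a b
    have h1 := abs_le.mp this
    linarith [h1.1]
  -- membership of T in the horizon
  have hTmem : T ∈ Finset.Icc 1 T := Finset.mem_Icc.mpr ⟨hT, le_refl T⟩
  -- card of the horizon
  have hcard : (Finset.Icc 1 T).card = T := by
    rw [Nat.card_Icc]
    omega
  -- the value of the play
  set V : ℝ := (1 / (T : ℝ)) * ∑ t ∈ Finset.Icc 1 T, pay (R t) (x t) (y t) with hV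
  -- boundedness facts
  have bddA : BddAbove (Set.range fun xx : stdSimplex ℝ (Fin A) =>
      (1 / (T : ℝ)) * ∑ t ∈ Finset.Icc 1 T, pay (R t) xx (y t)) := by
    refine ⟨1, ?_⟩
    rintro v ⟨xx, rfl⟩
    have : ∑ t ∈ Finset.Icc 1 T, pay (R t) (xx : Fin A → ℝ) (y t)
        ≤ ∑ t ∈ Finset.Icc 1 T, (1 : ℝ) := by
      apply Finset.sum_le_sum; intro t ht
      exact pay_le_one (fun a b => (hR t ht a b).2) xx.2 (hy t ht)
    calc (1 / (T : ℝ)) * ∑ t ∈ Finset.Icc 1 T, pay (R t) (xx : Fin A → ℝ) (y t)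
        ≤ (1 / (T : ℝ)) * ∑ t ∈ Finset.Icc 1 T, (1 : ℝ) :=
          mul_le_mul_of_nonneg_left this hTinv
      _ = 1 := by
          rw [Finset.sum_const, hcard]
          simp
          field_simp
  have bddB : BddBelow (Set.range fun yy : stdSimplex ℝ (Fin B) =>
      (1 / (T : ℝ)) * ∑ t ∈ Finset.Icc 1 T, pay (R t) (x t) yy) := by
    refine ⟨0, ?_⟩
    rintro v ⟨yy, rfl⟩
    apply mul_nonneg hTinv
    apply Finset.sum_nonneg; intro t ht
    exact pay_nonneg (fun a b => (hR t ht a b).1) (hx t ht).1 yy.2.1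
  have hxne : Nonempty (stdSimplex ℝ (Fin A)) := by
    refine ⟨⟨fun _ => (A : ℝ)⁻¹, fun _ => by positivity, ?_⟩⟩
    rw [Finset.sum_const, Finset.card_univ, Fintype.card_fin, nsmul_eq_mul]
    field_simp
  have hyne : Nonempty (stdSimplex ℝ (Fin B)) := by
    refine ⟨⟨fun _ => (B : ℝ)⁻¹, fun _ => by positivity, ?_⟩⟩
    rw [Finset.sum_const, Finset.card_univ, Fintype.card_fin, nsmul_eq_mul]
    field_simp
  -- Step A: the supremum is at most V + ρy + Δ
  have stepA : (⨆ xx : stdSimplex ℝ (Fin A),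
      pay (R T) xx (fun b => (1 / (T : ℝ)) * ∑ t ∈ Finset.Icc 1 T, y t b))
      ≤ V + ρy + Δ := by
    apply ciSup_le
    intro xx
    have lin := pay_avg_right (R T) (xx : Fin A → ℝ) (1 / (T : ℝ)) (Finset.Icc 1 T) y
    rw [lin]
    have step1 : ∑ t ∈ Finset.Icc 1 T, pay (R T) (xx : Fin A → ℝ) (y t)
        ≤ ∑ t ∈ Finset.Icc 1 T, (pay (R t) (xx : Fin A → ℝ) (y t) + Δ) := by
      apply Finset.sum_le_sum; intro t ht
      exact pay_le_pay_add (hup t ht) xx.2 (hy t ht)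
    have step2 : ∑ t ∈ Finset.Icc 1 T, (pay (R t) (xx : Fin A → ℝ) (y t) + Δ)
        = (∑ t ∈ Finset.Icc 1 T, pay (R t) (xx : Fin A → ℝ) (y t)) + (T : ℝ) * Δ := by
      rw [Finset.sum_add_distrib, Finset.sum_const, hcard, nsmul_eq_mul]
    have step3 : (1 / (T : ℝ)) * ∑ t ∈ Finset.Icc 1 T, pay (R t) (xx : Fin A → ℝ) (y t)
        ≤ ⨆ xx' : stdSimplex ℝ (Fin A),
          (1 / (T : ℝ)) * ∑ t ∈ Finset.Icc 1 T, pay (R t) xx' (y t) :=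
      le_ciSup bddA xx
    have step4 : (1 / (T : ℝ)) * ∑ t ∈ Finset.Icc 1 T, pay (R T) (xx : Fin A → ℝ) (y t)
        ≤ (1 / (T : ℝ)) * ((∑ t ∈ Finset.Icc 1 T, pay (R t) (xx : Fin A → ℝ) (y t))
            + (T : ℝ) * Δ) := by
      rw [← step2]
      exact mul_le_mul_of_nonneg_left step1 hTinv
    have hTd : (1 / (T : ℝ)) * ((T : ℝ) * Δ) = Δ := by field_simp
    calc (1 / (T : ℝ)) * ∑ t ∈ Finset.Icc 1 T, pay (R T) (xx : Fin A → ℝ) (y t)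
        ≤ (1 / (T : ℝ)) * (∑ t ∈ Finset.Icc 1 T, pay (R t) (xx : Fin A → ℝ) (y t)) + Δ := by
          rw [← hTd, ← mul_add]
          exact step4
      _ ≤ (⨆ xx' : stdSimplex ℝ (Fin A),
            (1 / (T : ℝ)) * ∑ t ∈ Finset.Icc 1 T, pay (R t) xx' (y t)) + Δ := by
          linarith [step3]
      _ ≤ V + ρy + Δ := by
          have := hregy
          rw [hV]
          linarith
  -- Step B: the infimum is at least V - ρx - Δ
  have stepB : V - ρx - Δ ≤ ⨅ yy : stdSimplex ℝ (Fin B),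
      pay (R T) (fun a => (1 / (T : ℝ)) * ∑ t ∈ Finset.Icc 1 T, x t a) yy := by
    apply le_ciInf
    intro yy
    have lin := pay_avg_left (R T) (yy : Fin B → ℝ) (1 / (T : ℝ)) (Finset.Icc 1 T) x
    rw [lin]
    have step1 : ∑ t ∈ Finset.Icc 1 T, pay (R t) (x t) (yy : Fin B → ℝ)
        ≤ ∑ t ∈ Finset.Icc 1 T, (pay (R T) (x t) (yy : Fin B → ℝ) + Δ) := by
      apply Finset.sum_le_sum; intro t ht
      exact pay_le_pay_add (hdown t ht) (hx t ht) yy.2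
    have step2 : ∑ t ∈ Finset.Icc 1 T, (pay (R T) (x t) (yy : Fin B → ℝ) + Δ)
        = (∑ t ∈ Finset.Icc 1 T, pay (R T) (x t) (yy : Fin B → ℝ)) + (T : ℝ) * Δ := by
      rw [Finset.sum_add_distrib, Finset.sum_const, hcard, nsmul_eq_mul]
    have step3 : (⨅ yy' : stdSimplex ℝ (Fin B),
          (1 / (T : ℝ)) * ∑ t ∈ Finset.Icc 1 T, pay (R t) (x t) yy')
        ≤ (1 / (T : ℝ)) * ∑ t ∈ Finset.Icc 1 T, pay (R t) (x t) (yy : Fin B → ℝ) :=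
      ciInf_le bddB yy
    have hTd : (1 / (T : ℝ)) * ((T : ℝ) * Δ) = Δ := by field_simp
    have step4 : (1 / (T : ℝ)) * ∑ t ∈ Finset.Icc 1 T, pay (R t) (x t) (yy : Fin B → ℝ)
        ≤ (1 / (T : ℝ)) * ∑ t ∈ Finset.Icc 1 T, pay (R T) (x t) (yy : Fin B → ℝ) + Δ := by
      rw [← hTd, ← mul_add, ← step2]
      exact mul_le_mul_of_nonneg_left step1 hTinv
    have hVbound : V - ρx ≤ (1 / (T : ℝ)) * ∑ t ∈ Finset.Icc 1 T,
        pay (R t) (x t) (yy : Fin B → ℝ) := by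
      rw [hV]
      linarith [hregx, step3]
    linarith
  linarith [stepA, stepB]
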